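/- For every d ≥ 0 and every n ≥ 1, p_d(n) = Σ_{r=0}^{n-1} C(d, r) · (a_{n,r} + a_{n,r+1}); that is, the entries of the triangle B defined by p_d(n) = Σ_r C(d,r)·b_{n,r} satisfy b_{n,r} = a_{n,r} + a_{n,r+1}. -/

import Mathlib

/-- A Ferrers diagram in `ℕ^k`: a finite nonempty downward-closed subset of `Fin k → ℕ`. -/
def IsFerrers {k : ℕ} (F : Finset (Fin k → ℕ)) : Prop :=
  F.Nonempty ∧ ∀ a ∈ F, ∀ x : Fin k → ℕ, (∀ i, x i ≤ a i) → x ∈ F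

/-- A Ferrers diagram is strict if every coordinate is used by some element. -/
def IsStrict {k : ℕ} (F : Finset (Fin k → ℕ)) : Prop :=
  ∀ i : Fin k, ∃ a ∈ F, a i ≠ 0

/-- `numPart d n` = `p_d(n)`, the number of Ferrers diagrams in `ℕ^(d+1)` with `n` elements. -/
noncomputable def numPart (d n : ℕ) : ℕ :=
  Nat.card {F : Finset (Fin (d + 1) → ℕ) // IsFerrers F ∧ F.card = n}

/-- `Amat n r` = `a_{n,r}`, the number of strict Ferrers diagrams in `ℕ^r` with `n` elements. -/
noncomputable def Amat (n r : ℕ) : ℕ :=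
  Nat.card {F : Finset (Fin r → ℕ) // IsFerrers F ∧ IsStrict F ∧ F.card = n}

/-- `mu r` = `μ_r = {0, e_1, …, e_r} ⊆ ℕ^r`. -/
def mu (r : ℕ) : Finset (Fin r → ℕ) :=
  insert 0 (Finset.univ.image fun i => Pi.single i 1)

/-- The reduced dimension of a Ferrers diagram `F ⊆ ℕ^x` (containing `μ_x`): the number of
coordinates used by some element of `F \ μ_x`. -/
noncomputable def rdim {x : ℕ} (F : Finset (Fin x → ℕ)) : ℕ :=
  Nat.card {i : Fin x // ∃ a ∈ F \ mu x, a i ≠ 0}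

/-- Two coordinates are touched by a common element of the skew diagram `σ`. -/
def Touches {x : ℕ} (σ : Finset (Fin x → ℕ)) (i j : Fin x) : Prop :=
  ∃ a ∈ σ, a i ≠ 0 ∧ a j ≠ 0

/-- `B` is a block of the finest partition of `Fin x` compatible with `σ`,
i.e. an equivalence class of the equivalence relation generated by `Touches σ`. -/
def IsBlock {x : ℕ} (σ : Finset (Fin x → ℕ)) (B : Set (Fin x)) : Prop :=
  ∃ i : Fin x, B = {j | Relation.EqvGen (Touches σ) i j}

/-- The support of `a` is contained in `B`. -/
def SuppIn {x : ℕ} (a : Fin x → ℕ) (B : Set (Fin x)) : Prop :=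
  ∀ i, a i ≠ 0 → i ∈ B

/-- The component of `σ` with block `B` is of type `σ₂`: `B = {i, j}` with `i ≠ j`, and the
elements of `σ` supported in `B` are exactly `{e_i + e_j}`. -/
def IsSigma2 {x : ℕ} (σ : Finset (Fin x → ℕ)) (B : Set (Fin x)) : Prop :=
  ∃ i j : Fin x, i ≠ j ∧ B = {i, j} ∧
    {a ∈ (σ : Set (Fin x → ℕ)) | SuppIn a B} = {Pi.single i 1 + Pi.single j 1}

/-- `Cmat m x` = `c_{m,x}`. -/
noncomputable def Cmat (m x : ℕ) : ℕ :=
  Nat.card {F : Finset (Fin x → ℕ) //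
    IsFerrers F ∧ mu x ⊆ F ∧ F.card = m + x + 1 ∧ rdim F = x}

/-- `Dmat m x` = `d_{m,x}`. -/
noncomputable def Dmat (m x : ℕ) : ℕ :=
  Nat.card {F : Finset (Fin x → ℕ) //
    IsFerrers F ∧ mu x ⊆ F ∧ F.card = m + x + 1 ∧ rdim F = x ∧
      ∀ B : Set (Fin x), IsBlock (F \ mu x) B → ¬ IsSigma2 (F \ mu x) B}

/-- A point of type 1: `e_i + e_j` for some `i ≠ j`. -/
def IsType1 {r : ℕ} (a : Fin r → ℕ) : Prop :=
  ∃ i j : Fin r, i ≠ j ∧ a = Pi.single i 1 + Pi.single j 1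

/-- A point of type 2: `2·e_i` for some `i`. -/
def IsType2 {r : ℕ} (a : Fin r → ℕ) : Prop :=
  ∃ i : Fin r, a = Pi.single i 2

/-- `Fmat n r` = `f_{n,r}`. -/
noncomputable def Fmat (n r : ℕ) : ℕ :=
  Nat.card {F : Finset (Fin r → ℕ) //
    IsFerrers F ∧ mu r ⊆ F ∧ F.card = n ∧
      ∀ B : Set (Fin r), IsBlock (F \ mu r) B →
        ∃ a ∈ F \ mu r, SuppIn a B ∧ ¬ IsType1 a}


section Statement18Aux
open Finset


noncomputable def fdSupp {k : ℕ} (F : Finset (Fin k → ℕ)) : Finset (Fin k) := by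
  classical exact Finset.univ.filter (fun i => ∃ a ∈ F, a i ≠ 0)

lemma mem_fdSupp {k : ℕ} {F : Finset (Fin k → ℕ)} {i : Fin k} :
    i ∈ fdSupp F ↔ ∃ a ∈ F, a i ≠ 0 := by simp [fdSupp]

lemma vanish_off_supp {k : ℕ} {F : Finset (Fin k → ℕ)} {a : Fin k → ℕ} (ha : a ∈ F) {i : Fin k}
    (hi : i ∉ fdSupp F) : a i = 0 := by
  by_contra h; exact hi (mem_fdSupp.2 ⟨a, ha, h⟩)

lemma coord_lt {k : ℕ} {F : Finset (Fin k → ℕ)} (hF : IsFerrers F) {a : Fin k → ℕ}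
    (ha : a ∈ F) (i : Fin k) : a i < F.card := by
  classical
  have hsub : (Finset.range (a i + 1)).image (fun t => Pi.single i t) ⊆ F := by
    intro x hx
    simp only [Finset.mem_image, Finset.mem_range] at hx
    obtain ⟨t, ht, rfl⟩ := hx
    refine hF.2 a ha _ (fun j => ?_)
    rcases eq_or_ne j i with rfl | h
    · simpa using Nat.lt_succ_iff.mp ht
    · simp [Pi.single_eq_of_ne h]
  have hcard : a i + 1 ≤ F.card := by
    have := Finset.card_le_card hsub
    rwa [Finset.card_image_of_injective _ (Pi.single_injective i), Finset.card_range] at this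
  omega

lemma ferrers_finite (k n : ℕ) : {F : Finset (Fin k → ℕ) | IsFerrers F ∧ F.card = n}.Finite := by
  classical
  apply Set.Finite.subset
    (Finset.finite_toSet ((Fintype.piFinset fun _ : Fin k => Finset.range n).powerset))
  rintro F ⟨hF, rfl⟩
  simp only [Finset.mem_coe, Finset.mem_powerset]
  intro a ha
  simp only [Fintype.mem_piFinset, Finset.mem_range]
  exact fun i => coord_lt hF ha i

section MapsAux
variable {k : ℕ}

variable {k : ℕ}

noncomputable def resMap (S : Finset (Fin k)) (a : Fin k → ℕ) : Fin S.card → ℕ :=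
  fun j => a (S.orderIsoOfFin rfl j)

noncomputable def extMap (S : Finset (Fin k)) (b : Fin S.card → ℕ) : Fin k → ℕ := by
  classical exact fun i => if h : i ∈ S then b ((S.orderIsoOfFin rfl).symm ⟨i, h⟩) else 0

lemma res_ext (S : Finset (Fin k)) (b : Fin S.card → ℕ) : resMap S (extMap S b) = b := by
  funext j
  have h : ((S.orderIsoOfFin rfl j : S) : Fin k) ∈ S := (S.orderIsoOfFin rfl j).2
  simp only [resMap, extMap, dif_pos h, Subtype.coe_eta, OrderIso.symm_apply_apply]

lemma extMap_apply_mem (S : Finset (Fin k)) (b : Fin S.card → ℕ) {i : Fin k} (h : i ∈ S) :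
    extMap S b i = b ((S.orderIsoOfFin rfl).symm ⟨i, h⟩) := by
  simp [extMap, dif_pos h]

lemma extMap_apply_not_mem (S : Finset (Fin k)) (b : Fin S.card → ℕ) {i : Fin k} (h : i ∉ S) :
    extMap S b i = 0 := by simp [extMap, dif_neg h]

lemma ext_res (S : Finset (Fin k)) {a : Fin k → ℕ} (ha : ∀ i ∉ S, a i = 0) :
    extMap S (resMap S a) = a := by
  funext i
  by_cases h : i ∈ S
  · rw [extMap_apply_mem S _ h]
    simp only [resMap, OrderIso.apply_symm_apply]
  · rw [extMap_apply_not_mem S _ h, ha i h]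

section Fiber

variable {S : Finset (Fin k)} {n : ℕ}

lemma forward_ferrers {F : Finset (Fin k → ℕ)} (hF : IsFerrers F) :
    IsFerrers (F.image (resMap S)) := by
  constructor
  · exact hF.1.image _
  · intro b hb y hy
    obtain ⟨a, ha, rfl⟩ := Finset.mem_image.1 hb
    have hx : extMap S y ∈ F := by
      refine hF.2 a ha _ (fun i => ?_)
      by_cases h : i ∈ S
      · rw [extMap_apply_mem S _ h]
        calc y ((S.orderIsoOfFin rfl).symm ⟨i, h⟩) ≤ resMap S a ((S.orderIsoOfFin rfl).symm ⟨i, h⟩) := hy _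
          _ = a i := by simp only [resMap, OrderIso.apply_symm_apply]
      · rw [extMap_apply_not_mem S _ h]; exact Nat.zero_le _
    have : resMap S (extMap S y) ∈ F.image (resMap S) := Finset.mem_image_of_mem _ hx
    rwa [res_ext] at this

lemma forward_strict {F : Finset (Fin k → ℕ)} (hs : fdSupp F = S) :
    IsStrict (F.image (resMap S)) := by
  intro j
  have hmem : ((S.orderIsoOfFin rfl j : S) : Fin k) ∈ fdSupp F := by
    rw [hs]; exact (S.orderIsoOfFin rfl j).2
  obtain ⟨a, ha, hne⟩ := mem_fdSupp.1 hmem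
  exact ⟨resMap S a, Finset.mem_image_of_mem _ ha, hne⟩

lemma forward_card {F : Finset (Fin k → ℕ)} (hs : fdSupp F = S) :
    (F.image (resMap S)).card = F.card := by
  apply Finset.card_image_of_injOn
  intro a₁ h₁ a₂ h₂ h
  have v₁ : ∀ i ∉ S, a₁ i = 0 := fun i hi => vanish_off_supp h₁ (hs ▸ hi)
  have v₂ : ∀ i ∉ S, a₂ i = 0 := fun i hi => vanish_off_supp h₂ (hs ▸ hi)
  rw [← ext_res S v₁, ← ext_res S v₂, h]

lemma backward_ferrers {G : Finset (Fin S.card → ℕ)} (hG : IsFerrers G) :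
    IsFerrers (G.image (extMap S)) := by
  constructor
  · exact hG.1.image _
  · intro a ha x hx
    obtain ⟨b, hb, rfl⟩ := Finset.mem_image.1 ha
    have hvx : ∀ i ∉ S, x i = 0 := fun i hi =>
      Nat.le_zero.1 ((hx i).trans_eq (extMap_apply_not_mem S b hi))
    have hy : resMap S x ∈ G := by
      refine hG.2 b hb _ (fun j => ?_)
      have : resMap S x j ≤ resMap S (extMap S b) j := hx _
      rwa [res_ext] at this
    have : extMap S (resMap S x) ∈ G.image (extMap S) := Finset.mem_image_of_mem _ hy
    rwa [ext_res S hvx] at this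

lemma backward_card {G : Finset (Fin S.card → ℕ)} :
    (G.image (extMap S)).card = G.card :=
  Finset.card_image_of_injective _ (Function.LeftInverse.injective (res_ext S))

lemma backward_supp {G : Finset (Fin S.card → ℕ)} (hG : IsStrict G) :
    fdSupp (G.image (extMap S)) = S := by
  apply Finset.ext
  intro i
  rw [mem_fdSupp]
  constructor
  · rintro ⟨a, ha, hne⟩
    obtain ⟨b, hb, rfl⟩ := Finset.mem_image.1 ha
    by_contra h
    exact hne (extMap_apply_not_mem S b h)
  · intro hi
    obtain ⟨b, hb, hne⟩ := hG ((S.orderIsoOfFin rfl).symm ⟨i, hi⟩)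
    refine ⟨extMap S b, Finset.mem_image_of_mem _ hb, ?_⟩
    rwa [extMap_apply_mem S _ hi]

noncomputable def fiberEquiv (n : ℕ) (S : Finset (Fin k)) :
    {F : Finset (Fin k → ℕ) // IsFerrers F ∧ F.card = n ∧ fdSupp F = S} ≃
    {G : Finset (Fin S.card → ℕ) // IsFerrers G ∧ IsStrict G ∧ G.card = n} where
  toFun x := ⟨x.1.image (resMap S), forward_ferrers x.2.1, forward_strict x.2.2.2,
    by rw [forward_card x.2.2.2, x.2.2.1]⟩
  invFun y := ⟨y.1.image (extMap S), backward_ferrers y.2.1,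
    by rw [backward_card, y.2.2.2], backward_supp y.2.2.1⟩
  left_inv x := by
    apply Subtype.ext
    simp only [Finset.image_image]
    rw [Finset.image_congr (g := id), Finset.image_id]
    intro a ha
    refine ext_res S (fun i hi => vanish_off_supp ha ?_)
    rw [x.2.2.2]; exact hi
  right_inv y := by
    apply Subtype.ext
    simp only [Finset.image_image]
    rw [Finset.image_congr (g := id), Finset.image_id]
    intro b _
    exact res_ext S b

end Fiber

end MapsAux

lemma natCard_sigma {ι : Type*} [Fintype ι] {α : ι → Type*} [∀ i, Finite (α i)] :
    Nat.card (Σ i, α i) = ∑ i, Nat.card (α i) := by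
  letI := fun i => Fintype.ofFinite (α i)
  simp [Nat.card_eq_fintype_card]

lemma algebra_step (d n : ℕ) (hn : 1 ≤ n) (A : ℕ → ℕ) (hA : ∀ r, n ≤ r → A r = 0) :
    ∑ r ∈ Finset.range (d + 2), (d + 1).choose r * A r
      = ∑ r ∈ Finset.range n, d.choose r * (A r + A (r + 1)) := by
  set m := d + n + 1 with hm
  have h1 : ∑ r ∈ Finset.range (d + 2), (d + 1).choose r * A r
      = ∑ r ∈ Finset.range (m + 1), (d + 1).choose r * A r := by
    apply Finset.sum_subset (Finset.range_subset_range.2 (by omega))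
    intro r _ hr
    rw [Nat.choose_eq_zero_of_lt (by simp only [Finset.mem_range] at hr; omega), zero_mul]
  have h2 : ∑ r ∈ Finset.range n, d.choose r * (A r + A (r + 1))
      = ∑ r ∈ Finset.range (m + 1), d.choose r * (A r + A (r + 1)) := by
    apply Finset.sum_subset (Finset.range_subset_range.2 (by omega))
    intro r _ hr
    simp only [Finset.mem_range] at hr
    rw [hA r (by omega), hA (r + 1) (by omega)]
    simp
  rw [h1, h2]
  rw [Finset.sum_range_succ' (fun r => (d + 1).choose r * A r) m]
  have key : ∀ r, (d + 1).choose (r + 1) * A (r + 1)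
      = d.choose r * A (r + 1) + d.choose (r + 1) * A (r + 1) := by
    intro r; rw [Nat.choose_succ_succ, add_mul]
  simp only [key]
  rw [Finset.sum_add_distrib]
  have h3 : ∑ r ∈ Finset.range m, d.choose (r + 1) * A (r + 1) + (d + 1).choose 0 * A 0
      = ∑ r ∈ Finset.range (m + 1), d.choose r * A r := by
    rw [Finset.sum_range_succ' (fun r => d.choose r * A r) m]
    simp
  have h4 : ∑ r ∈ Finset.range (m + 1), d.choose r * A (r + 1)
      = ∑ r ∈ Finset.range m, d.choose r * A (r + 1) := by
    rw [Finset.sum_range_succ, hA (m + 1) (by omega), mul_zero, add_zero]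
  have h5 : ∑ r ∈ Finset.range (m + 1), d.choose r * (A r + A (r + 1))
      = ∑ r ∈ Finset.range (m + 1), d.choose r * A r
        + ∑ r ∈ Finset.range (m + 1), d.choose r * A (r + 1) := by
    simp only [mul_add]; rw [Finset.sum_add_distrib]
  rw [h5, ← h3, h4]
  ring

lemma choose_count (k r : ℕ) :
    ((Finset.univ : Finset (Finset (Fin k))).filter (fun S => S.card = r)).card
      = k.choose r := by
  classical
  rw [← Finset.powerset_univ, ← Finset.powersetCard_eq_filter, Finset.card_powersetCard,
    Finset.card_univ, Fintype.card_fin]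


lemma mu_subset_of_strict {r : ℕ} {F : Finset (Fin r → ℕ)} (hF : IsFerrers F)
    (hs : IsStrict F) : mu r ⊆ F := by
  intro x hx
  simp only [mu, Finset.mem_insert, Finset.mem_image, Finset.mem_univ, true_and] at hx
  rcases hx with rfl | ⟨i, rfl⟩
  · obtain ⟨a, ha⟩ := hF.1
    exact hF.2 a ha 0 (fun i => Nat.zero_le _)
  · obtain ⟨a, ha, hne⟩ := hs i
    refine hF.2 a ha _ (fun j => ?_)
    rcases eq_or_ne j i with rfl | h
    · simp only [Pi.single_eq_same]; omega
    · simp [Pi.single_eq_of_ne h]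

lemma card_mu (r : ℕ) : (mu r).card = r + 1 := by
  classical
  rw [mu, Finset.card_insert_of_notMem, Finset.card_image_of_injective, Finset.card_univ,
    Fintype.card_fin]
  · intro i j h
    by_contra hne
    have h2 : Pi.single i 1 i = Pi.single j 1 i := congrFun h i
    rw [Pi.single_eq_same, Pi.single_eq_of_ne hne] at h2
    exact one_ne_zero h2
  · simp only [Finset.mem_image, Finset.mem_univ, true_and, not_exists]
    intro i h
    have := congrFun h i
    simp at this

lemma amat_eq_zero {n r : ℕ} (h : n ≤ r) : Amat n r = 0 := by
  have : IsEmpty {F : Finset (Fin r → ℕ) // IsFerrers F ∧ IsStrict F ∧ F.card = n} := by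
    constructor
    rintro ⟨F, hF, hs, hc⟩
    have h1 : (mu r).card ≤ F.card := Finset.card_le_card (mu_subset_of_strict hF hs)
    rw [card_mu, hc] at h1
    omega
  simp [Amat, Nat.card_of_isEmpty]

instance ferrersFinite (k n : ℕ) : Finite {F : Finset (Fin k → ℕ) // IsFerrers F ∧ F.card = n} :=
  (ferrers_finite k n).to_subtype

instance fiberFinite (k n : ℕ) (S : Finset (Fin k)) :
    Finite {F : Finset (Fin k → ℕ) // IsFerrers F ∧ F.card = n ∧ fdSupp F = S} :=
  Set.Finite.to_subtype ((ferrers_finite k n).subset (fun _ hF => ⟨hF.1, hF.2.1⟩))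

noncomputable def eqvSigma (k n : ℕ) :
    {F : Finset (Fin k → ℕ) // IsFerrers F ∧ F.card = n} ≃
    Σ S : Finset (Fin k), {F : Finset (Fin k → ℕ) // IsFerrers F ∧ F.card = n ∧ fdSupp F = S} where
  toFun x := ⟨fdSupp x.1, x.1, x.2.1, x.2.2, rfl⟩
  invFun y := ⟨y.2.1, y.2.2.1, y.2.2.2.1⟩
  left_inv x := rfl
  right_inv := by rintro ⟨S, F, h1, h2, rfl⟩; rfl

end Statement18Aux

/-- `p_d(n) = Σ_{r=0}^{n-1} C(d,r) · (a_{n,r} + a_{n,r+1})` for all `d ≥ 0`,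
`n ≥ 1`; i.e. the `B`-triangle entries are `b_{n,r} = a_{n,r} + a_{n,r+1}`. -/
theorem statement18 (d n : ℕ) (hn : 1 ≤ n) :
    numPart d n = ∑ r ∈ Finset.range n, Nat.choose d r * (Amat n r + Amat n (r + 1)) := by
  classical
  have key : numPart d n = ∑ r ∈ Finset.range (d + 2), (d + 1).choose r * Amat n r := by
    rw [numPart, Nat.card_congr (eqvSigma (d + 1) n), natCard_sigma]
    have step1 : ∀ S : Finset (Fin (d + 1)),
        Nat.card {F : Finset (Fin (d + 1) → ℕ) // IsFerrers F ∧ F.card = n ∧ fdSupp F = S}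
          = Amat n S.card := fun S => Nat.card_congr (fiberEquiv n S)
    simp only [step1]
    rw [← Finset.sum_fiberwise_of_maps_to (g := fun S : Finset (Fin (d + 1)) => S.card)
        (t := Finset.range (d + 2))
        (fun S _ => Finset.mem_range.2 (by
          have h := Finset.card_le_univ S
          simp only [Finset.card_univ, Fintype.card_fin] at h
          show S.card < d + 2
          omega))]
    apply Finset.sum_congr rfl
    intro r _
    calc ∑ S ∈ Finset.univ.filter (fun S : Finset (Fin (d + 1)) => S.card = r), Amat n S.card
        = ∑ _S ∈ Finset.univ.filter (fun S : Finset (Fin (d + 1)) => S.card = r), Amat n r :=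
          Finset.sum_congr rfl (fun S hS => by rw [(Finset.mem_filter.1 hS).2])
      _ = (d + 1).choose r * Amat n r := by
          rw [Finset.sum_const, choose_count, smul_eq_mul]
  rw [key, algebra_step d n hn (Amat n) (fun r hr => amat_eq_zero hr)]
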